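/- Let m ∈ (1,2], β ≤ 1+√m, and suppose (u_k)_{k≥1} ∈ {0,1,m}^ℕ is a unique β-expansion over the alphabet {0,1,m}. If u_i = m for some i, then u_k = m for all k ≤ i. -/

import Mathlib

open Finset Filter

namespace Stmt13

/-- geometric tail sum -/
lemma geom_tsum {β : ℝ} (hβ1 : 1 < β) (c : ℝ) :
    ∑' k : ℕ, c / β ^ (k + 1) = c / (β - 1) := by
  have hβ0 : 0 < β := by linarith
  have h1 : (0:ℝ) ≤ 1/β := by positivity
  have h2 : 1/β < 1 := by rw [div_lt_one hβ0]; exact hβ1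
  have hfun : (fun k : ℕ => c / β ^ (k + 1)) = fun k : ℕ => (c / β) * (1/β) ^ k := by
    funext k; rw [pow_succ]; ring
  rw [hfun, tsum_mul_left, tsum_geometric_of_lt_one h1 h2]
  rw [one_div]
  field_simp

lemma geom_summable {β : ℝ} (hβ1 : 1 < β) (c : ℝ) :
    Summable (fun k : ℕ => c / β ^ (k + 1)) := by
  have hβ0 : 0 < β := by linarith
  have h1 : (0:ℝ) ≤ 1/β := by positivity
  have h2 : 1/β < 1 := by rw [div_lt_one hβ0]; exact hβ1
  have hfun : (fun k : ℕ => c / β ^ (k + 1)) = fun k : ℕ => (c / β) * (1/β) ^ k := by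
    funext k; rw [pow_succ]; ring
  rw [hfun]
  exact (summable_geometric_of_lt_one h1 h2).mul_left _

lemma dig_summable {m β : ℝ} (hβ1 : 1 < β) (a : ℕ → ℝ)
    (ha : ∀ k, 0 ≤ a k ∧ a k ≤ m) : Summable (fun k => a k / β ^ (k + 1)) := by
  have hβ0 : 0 < β := by linarith
  refine Summable.of_nonneg_of_le
    (fun k => div_nonneg (ha k).1 (pow_pos hβ0 _).le)
    (fun k => by gcongr; exact (ha k).2) (geom_summable hβ1 m)

lemma dig_tsum_nonneg {m β : ℝ} (hβ1 : 1 < β) (a : ℕ → ℝ)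
    (ha : ∀ k, 0 ≤ a k ∧ a k ≤ m) : 0 ≤ ∑' k : ℕ, a k / β ^ (k + 1) := by
  have hβ0 : 0 < β := by linarith
  exact tsum_nonneg fun k => div_nonneg (ha k).1 (pow_pos hβ0 _).le

lemma dig_tsum_le {m β : ℝ} (hβ1 : 1 < β) (a : ℕ → ℝ)
    (ha : ∀ k, 0 ≤ a k ∧ a k ≤ m) :
    ∑' k : ℕ, a k / β ^ (k + 1) ≤ m / (β - 1) := by
  have hβ0 : 0 < β := by linarith
  rw [← geom_tsum hβ1 m]
  exact Summable.tsum_le_tsum (fun k => by gcongr; exact (ha k).2)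
    (dig_summable hβ1 a ha) (geom_summable hβ1 m)

/-- split a tail sum at position n -/
lemma S_split {β : ℝ} (hβ1 : 1 < β) (w : ℕ → ℝ)
    (hw : Summable fun k => w k / β ^ (k + 1)) (n : ℕ) :
    ∑' k : ℕ, w k / β ^ (k + 1)
      = (∑ k ∈ range n, w k / β ^ (k + 1)) + (∑' k : ℕ, w (n + k) / β ^ (k + 1)) / β ^ n := by
  have hβ0 : 0 < β := by linarith
  have hpow : (0:ℝ) < β ^ n := pow_pos hβ0 n
  rw [← Summable.sum_add_tsum_nat_add n hw]
  congr 1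
  have hfun : (fun k : ℕ => w (k + n) / β ^ (k + n + 1))
      = fun k : ℕ => (w (n + k) / β ^ (k + 1)) * (1 / β ^ n) := by
    funext k
    rw [show k + n = n + k from Nat.add_comm k n, show n + k + 1 = (k + 1) + n by omega, pow_add]
    field_simp
  rw [hfun, tsum_mul_right]
  field_simp

/-- peel off head term -/
lemma S_head {β : ℝ} (hβ1 : 1 < β) (w : ℕ → ℝ)
    (hw : Summable fun k => w k / β ^ (k + 1)) :
    ∑' k : ℕ, w k / β ^ (k + 1)
      = w 0 / β + (∑' k : ℕ, w (1 + k) / β ^ (k + 1)) / β := by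
  have := S_split hβ1 w hw 1
  simpa using this

/-- greedy-type digit map -/
noncomputable def D (m β y : ℝ) : ℝ := if m / β ≤ y then m else if 1 / β ≤ y then 1 else 0

noncomputable def T (m β y : ℝ) : ℝ := β * y - D m β y

lemma D_mem (m β y : ℝ) : D m β y = 0 ∨ D m β y = 1 ∨ D m β y = m := by
  unfold D; split_ifs <;> tauto

lemma T_mem {m β : ℝ} (hβ1 : 1 < β) (hm1 : 1 ≤ m) (hm2 : m ≤ 2) (hM1 : 1 ≤ m / (β - 1))
    {y : ℝ} (hy : 0 ≤ y ∧ y ≤ m / (β - 1)) : 0 ≤ T m β y ∧ T m β y ≤ m / (β - 1) := by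
  have hβ0 : 0 < β := by linarith
  have hb : 0 < β - 1 := by linarith
  have hM : β * (m / (β - 1)) - m = m / (β - 1) := by field_simp; ring
  have hMm : m - 1 ≤ m / (β - 1) := by linarith
  unfold T D
  split_ifs with h1 h2
  · rw [div_le_iff₀ hβ0] at h1
    constructor
    · nlinarith
    · nlinarith [hy.2]
  · rw [div_le_iff₀ hβ0] at h2
    rw [not_le, lt_div_iff₀ hβ0] at h1
    constructor
    · nlinarith
    · nlinarith
  · rw [not_le, lt_div_iff₀ hβ0] at h2
    constructor
    · nlinarith [hy.1]
    · nlinarith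

/-- every point of [0, m/(β-1)] has an expansion with digits {0,1,m} -/
lemma rep {m β : ℝ} (hβ1 : 1 < β) (hm1 : 1 ≤ m) (hm2 : m ≤ 2) (hM1 : 1 ≤ m / (β - 1))
    {y : ℝ} (hy0 : 0 ≤ y) (hyM : y ≤ m / (β - 1)) :
    ∃ w : ℕ → ℝ, (∀ k, w k = 0 ∨ w k = 1 ∨ w k = m) ∧
      ∑' k : ℕ, w k / β ^ (k + 1) = y := by
  have hβ0 : 0 < β := by linarith
  have hm0 : (0:ℝ) ≤ m := by linarith
  set z : ℕ → ℝ := fun n => (T m β)^[n] y with hz_def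
  have hz : ∀ n, 0 ≤ z n ∧ z n ≤ m / (β - 1) := by
    intro n
    induction n with
    | zero => exact ⟨hy0, hyM⟩
    | succ n ih =>
      have hzz : z (n + 1) = T m β (z n) := Function.iterate_succ_apply' (T m β) n y
      rw [hzz]
      exact T_mem hβ1 hm1 hm2 hM1 ih
  set w : ℕ → ℝ := fun k => D m β (z k) with hw_def
  have hwdig : ∀ k, w k = 0 ∨ w k = 1 ∨ w k = m := fun k => D_mem m β (z k)
  have hwbd : ∀ k, 0 ≤ w k ∧ w k ≤ m := by
    intro k; rcases hwdig k with h | h | h <;> rw [h] <;> constructor <;> linarith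
  have hsum : Summable (fun k => w k / β ^ (k + 1)) := dig_summable hβ1 w hwbd
  have key : ∀ n, y - ∑ k ∈ range n, w k / β ^ (k + 1) = z n / β ^ n := by
    intro n
    induction n with
    | zero => simp [hz_def]
    | succ n ih =>
      have hz' : z (n + 1) = β * z n - w n := by
        have hzz : z (n + 1) = T m β (z n) := Function.iterate_succ_apply' (T m β) n y
        rw [hzz]; rfl
      have hpow : (0:ℝ) < β ^ n := pow_pos hβ0 n
      calc y - ∑ k ∈ range (n + 1), w k / β ^ (k + 1)
          = (y - ∑ k ∈ range n, w k / β ^ (k + 1)) - w n / β ^ (n + 1) := by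
            rw [sum_range_succ]; ring
        _ = z n / β ^ n - w n / β ^ (n + 1) := by rw [ih]
        _ = (β * z n - w n) / β ^ (n + 1) := by rw [pow_succ]; field_simp
        _ = z (n + 1) / β ^ (n + 1) := by rw [hz']
  have htend0 : Tendsto (fun n => z n / β ^ n) atTop (nhds 0) := by
    have h1 : (0:ℝ) ≤ 1/β := by positivity
    have h2 : 1/β < 1 := by rw [div_lt_one hβ0]; exact hβ1
    have hg : Tendsto (fun n : ℕ => (m / (β - 1)) * (1/β) ^ n) atTop (nhds 0) := by
      have := (tendsto_pow_atTop_nhds_zero_of_lt_one h1 h2).const_mul (m / (β - 1))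
      simpa using this
    refine squeeze_zero (fun n => div_nonneg (hz n).1 (pow_pos hβ0 n).le) (fun n => ?_) hg
    have hle : z n / β ^ n ≤ (m / (β - 1)) / β ^ n := by
      gcongr
      exact (hz n).2
    refine hle.trans_eq ?_
    rw [one_div, inv_pow]
    field_simp
  have htendy : Tendsto (fun n => ∑ k ∈ range n, w k / β ^ (k + 1)) atTop (nhds y) := by
    have hfun : (fun n => ∑ k ∈ range n, w k / β ^ (k + 1)) = fun n => y - z n / β ^ n := by
      funext n; have := key n; linarith
    rw [hfun]
    have := (tendsto_const_nhds (x := y) (f := atTop (α := ℕ))).sub htend0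
    simpa using this
  exact ⟨w, hwdig, tendsto_nhds_unique hsum.hasSum.tendsto_sum_nat htendy⟩

end Stmt13

open Stmt13 in
/-- for m ∈ (1,2] and 1 < β ≤ 1+√m, if u is a unique β-expansion over
{0,1,m} and u_i = m, then u_k = m for all k ≤ i. -/
theorem stmt_13 (m β : ℝ) (hm1 : 1 < m) (hm2 : m ≤ 2) (hβ1 : 1 < β)
    (hβ2 : β ≤ 1 + Real.sqrt m)
    (u : ℕ → ℝ) (hdig : ∀ k, u k = 0 ∨ u k = 1 ∨ u k = m)
    (huniq : ∀ v : ℕ → ℝ, (∀ k, v k = 0 ∨ v k = 1 ∨ v k = m) →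
      (∑' k : ℕ, v k / β ^ (k + 1)) = (∑' k : ℕ, u k / β ^ (k + 1)) → v = u)
    (i : ℕ) (hi : u i = m) :
    ∀ k ≤ i, u k = m := by
  have hβ0 : 0 < β := by linarith
  have hb : 0 < β - 1 := by linarith
  have hm0 : (0:ℝ) ≤ m := by linarith
  have hs : Real.sqrt m ^ 2 = m := Real.sq_sqrt hm0
  have hsq : (β - 1) ^ 2 ≤ m := by nlinarith [Real.sqrt_nonneg m]
  set M : ℝ := m / (β - 1) with hM_def
  have hMb : β - 1 ≤ M := by rw [hM_def, le_div_iff₀ hb]; nlinarith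
  have hM1 : 1 ≤ M := by
    rw [hM_def, le_div_iff₀ hb]
    nlinarith [Real.sqrt_nonneg m]
  have hub : ∀ k, 0 ≤ u k ∧ u k ≤ m := by
    intro k; rcases hdig k with h | h | h <;> rw [h] <;> constructor <;> linarith
  set x : ℕ → ℝ := fun j => ∑' k : ℕ, u (j + k) / β ^ (k + 1) with hx_def
  have hubs : ∀ j, ∀ k, 0 ≤ u (j + k) ∧ u (j + k) ≤ m := fun j k => hub (j + k)
  have hxsum : ∀ j, Summable (fun k => u (j + k) / β ^ (k + 1)) :=
    fun j => dig_summable hβ1 _ (hubs j)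
  have hx0 : ∀ j, 0 ≤ x j := fun j => dig_tsum_nonneg hβ1 _ (hubs j)
  have hxM : ∀ j, x j ≤ M := fun j => dig_tsum_le hβ1 _ (hubs j)
  have hrec : ∀ j, x j = u j / β + x (j + 1) / β := by
    intro j
    have h := S_head hβ1 (fun k => u (j + k)) (hxsum j)
    simp only [Nat.add_zero] at h
    have e1 : ∑' k : ℕ, u (j + (1 + k)) / β ^ (k + 1)
        = ∑' k : ℕ, u ((j + 1) + k) / β ^ (k + 1) :=
      tsum_congr fun k => by rw [show j + (1 + k) = (j + 1) + k by omega]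
    rw [e1] at h
    exact h
  -- key contradiction builder
  have contra : ∀ (n : ℕ) (d r : ℝ), (d = 1 ∨ d = m) → 0 ≤ r → r ≤ M →
      d + r = β * x n → d ≠ u n → False := by
    intro n d r hd hr0 hrM hdr hne
    obtain ⟨w, hwdig, hwsum⟩ := rep hβ1 (le_of_lt hm1) hm2 hM1 hr0 hrM
    set v : ℕ → ℝ := fun k => if k < n then u k else if k = n then d else w (k - (n + 1))
      with hv_def
    have hvdig : ∀ k, v k = 0 ∨ v k = 1 ∨ v k = m := by
      intro k
      simp only [hv_def]
      split_ifs with h1 h2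
      · exact hdig k
      · rcases hd with h | h <;> rw [h] <;> tauto
      · exact hwdig (k - (n + 1))
    have hvb : ∀ k, 0 ≤ v k ∧ v k ≤ m := by
      intro k; rcases hvdig k with h | h | h <;> rw [h] <;> constructor <;> linarith
    have hvsum : Summable (fun k => v k / β ^ (k + 1)) := dig_summable hβ1 v hvb
    have hvtail_sum : Summable (fun k => v (n + k) / β ^ (k + 1)) :=
      dig_summable hβ1 _ (fun k => hvb (n + k))
    have htail : ∑' k : ℕ, v (n + k) / β ^ (k + 1) = x n := by
      have h := S_head hβ1 (fun k => v (n + k)) hvtail_sum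
      simp only [Nat.add_zero] at h
      have h0 : v n = d := by simp [hv_def]
      have e1 : ∑' k : ℕ, v (n + (1 + k)) / β ^ (k + 1) = ∑' k : ℕ, w k / β ^ (k + 1) :=
        tsum_congr fun k => by
          simp only [hv_def]
          rw [if_neg (by omega), if_neg (by omega), show n + (1 + k) - (n + 1) = k by omega]
      rw [h, h0, e1, hwsum]
      field_simp
      linarith [hdr]
    have htot : ∑' k : ℕ, v k / β ^ (k + 1) = ∑' k : ℕ, u k / β ^ (k + 1) := by
      rw [S_split hβ1 v hvsum n, S_split hβ1 u (by simpa using hxsum 0) n]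
      congr 1
      · refine Finset.sum_congr rfl fun k hk => ?_
        simp only [hv_def]
        rw [if_pos (mem_range.mp hk)]
      · rw [htail]
    have heq := huniq v hvdig htot
    have hvn : v n = d := by simp [hv_def]
    rw [heq] at hvn
    exact hne hvn.symm
  -- step
  have step : ∀ j, u (j + 1) = m → u j = m := by
    intro j hj1
    by_contra hne
    have hrec1 : x (j + 1) = m / β + x (j + 2) / β := by
      have h := hrec (j + 1)
      rw [hj1, show j + 1 + 1 = j + 2 by omega] at h
      exact h
    rcases le_or_gt (x (j + 2)) (M - m + 1) with hA | hB
    · -- replace digit m at position j+1 by digit 1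
      refine contra (j + 1) 1 (m - 1 + x (j + 2)) (Or.inl rfl)
        (by linarith [hx0 (j + 2)]) (by linarith) ?_ ?_
      · rw [hrec1]; field_simp; ring
      · rw [hj1]; exact fun h => by linarith
    · have hx1 : 1 ≤ x (j + 1) := by
        have h1 : β * x (j + 1) = m + x (j + 2) := by rw [hrec1]; field_simp
        nlinarith
      rcases hdig j with h0 | h1 | hm'
      · refine contra j 1 (x (j + 1) - 1) (Or.inl rfl) (by linarith)
          (by linarith [hxM (j + 1)]) ?_ (by rw [h0]; norm_num)
        have h := hrec j
        rw [h0] at h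
        rw [h]
        field_simp; ring
      · refine contra j m (1 + x (j + 1) - m) (Or.inr rfl) (by linarith)
          (by linarith [hxM (j + 1)]) ?_ (by rw [h1]; exact fun h => by linarith)
        have h := hrec j
        rw [h1] at h
        rw [h]
        field_simp; ring
      · exact hne hm'
  -- downward induction
  have main : ∀ d k, u (k + d) = m → u k = m := by
    intro d
    induction d with
    | zero => intro k h; simpa using h
    | succ d ih =>
      intro k h
      have h' : u ((k + 1) + d) = m := by rw [show (k + 1) + d = k + (d + 1) by omega]; exact h
      exact step k (ih (k + 1) h')
  intro k hk
  exact main (i - k) k (by rwa [show k + (i - k) = i by omega])
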